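/- If n_l < n_u, then for any two states s, s' in the search space S there exists a walk from s to s' lying entirely inside the search space graph whose length is exactly the Hamming distance HD(s, s'). -/

import Mathlib

/-- Hamming weight of a binary string: number of coordinates equal to `true`. -/
def HW {N : ℕ} (s : Fin N → Bool) : ℕ :=
  (Finset.univ.filter fun i => s i = true).card

/-- The search space: binary strings of length `N` with Hamming weight in `[nl, nu]`. -/
def searchSpace (N nl nu : ℕ) : Finset (Fin N → Bool) :=
  Finset.univ.filter fun s => nl ≤ HW s ∧ HW s ≤ nu

/-- The search space graph: vertices are the states in the search space, with an edge
between two states iff their Hamming distance is 1. -/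
def SearchGraph (N nl nu : ℕ) :
    SimpleGraph {s : Fin N → Bool // nl ≤ HW s ∧ HW s ≤ nu} where
  Adj s s' := hammingDist s.1 s'.1 = 1
  symm := ⟨fun s s' h => by simpa [hammingDist_comm] using h⟩
  loopless := ⟨fun s h => by simp at h⟩

lemma hw_filter_update {N : ℕ} (s : Fin N → Bool) (i : Fin N) (b : Bool) :
    (Finset.univ.filter fun j => Function.update s i b j = true) =
      if b then insert i (Finset.univ.filter fun j => s j = true)
      else (Finset.univ.filter fun j => s j = true).erase i := by
  ext j
  rcases eq_or_ne j i with rfl | hj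
  · cases b <;> simp [Function.update_self]
  · cases b <;> simp [Function.update_of_ne hj, hj]

lemma hw_update_true {N : ℕ} (s : Fin N → Bool) (i : Fin N) (hi : s i = false) :
    HW (Function.update s i true) = HW s + 1 := by
  rw [HW, hw_filter_update]
  simp only [if_true]
  rw [Finset.card_insert_of_notMem (by simp [hi])]
  rfl

lemma hw_update_false {N : ℕ} (s : Fin N → Bool) (i : Fin N) (hi : s i = true) :
    HW (Function.update s i false) + 1 = HW s := by
  rw [HW, hw_filter_update]
  simp only [if_false, Bool.false_eq_true]
  rw [Finset.card_erase_of_mem (by simp [hi])]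
  have : 1 ≤ HW s := Finset.card_pos.mpr ⟨i, by simp [hi, HW]⟩
  unfold HW at this ⊢
  omega

lemma dist_update_one {N : ℕ} (s s' : Fin N → Bool) (i : Fin N) (h : s i ≠ s' i) :
    hammingDist s (Function.update s i (s' i)) = 1 := by
  rw [hammingDist]
  convert Finset.card_singleton i using 2
  ext j
  rcases eq_or_ne j i with rfl | hj
  · simp [Function.update_self, h]
  · simp [Function.update_of_ne hj, hj]

lemma dist_update_pred {N : ℕ} (s s' : Fin N → Bool) (i : Fin N) (h : s i ≠ s' i) :
    hammingDist (Function.update s i (s' i)) s' + 1 = hammingDist s s' := by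
  rw [hammingDist, hammingDist]
  have hset : ({j | Function.update s i (s' i) j ≠ s' j} : Finset (Fin N)) =
      ({j | s j ≠ s' j} : Finset (Fin N)).erase i := by
    ext j
    rcases eq_or_ne j i with rfl | hj
    · simp [Function.update_self]
    · simp [Function.update_of_ne hj, hj]
  rw [hset, Finset.card_erase_of_mem (by simp [h])]
  have : 1 ≤ ({j | s j ≠ s' j} : Finset (Fin N)).card :=
    Finset.card_pos.mpr ⟨i, by simp [h]⟩
  omega

/-- If `n_l < n_u`, then any two states in the search space are joined by
a walk in the search space graph whose length is exactly their Hamming distance. -/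
theorem exists_walk_length_eq_hammingDist (N nl nu : ℕ) (h1 : nl < nu) (h2 : nu ≤ N)
    (s s' : {s : Fin N → Bool // nl ≤ HW s ∧ HW s ≤ nu}) :
    ∃ p : (SearchGraph N nl nu).Walk s s', p.length = hammingDist s.1 s'.1 := by
  obtain ⟨n, hn⟩ : ∃ n, hammingDist s.1 s'.1 = n := ⟨_, rfl⟩
  induction n generalizing s with
  | zero =>
    have : s = s' := Subtype.ext (hammingDist_eq_zero.mp hn)
    subst this
    exact ⟨SimpleGraph.Walk.nil, by simp [hn]⟩
  | succ n ih =>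
    -- choose a coordinate to flip
    have hmain : ∃ i : Fin N, s.1 i ≠ s'.1 i ∧
        nl ≤ HW (Function.update s.1 i (s'.1 i)) ∧
        HW (Function.update s.1 i (s'.1 i)) ≤ nu := by
      by_cases hup : ∃ i, s.1 i = false ∧ s'.1 i = true ∧ HW s.1 < nu
      · obtain ⟨i, hi1, hi2, hi3⟩ := hup
        refine ⟨i, by simp [hi1, hi2], ?_, ?_⟩
        · rw [hi2, hw_update_true _ _ hi1]; exact le_trans s.2.1 (Nat.le_succ _)
        · rw [hi2, hw_update_true _ _ hi1]; omega
      · by_cases hdown : ∃ i, s.1 i = true ∧ s'.1 i = false ∧ nl < HW s.1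
        · obtain ⟨i, hi1, hi2, hi3⟩ := hdown
          refine ⟨i, by simp [hi1, hi2], ?_, ?_⟩
          · rw [hi2]
            have := hw_update_false s.1 i hi1
            omega
          · rw [hi2]
            have := hw_update_false s.1 i hi1
            have := s.2.2
            omega
        · exfalso
          push_neg at hup hdown
          have hpos : (0 : ℕ) < hammingDist s.1 s'.1 := by omega
          have hne : s.1 ≠ s'.1 := hammingDist_pos.mp hpos
          obtain ⟨i, hi⟩ : ∃ i, s.1 i ≠ s'.1 i := Function.ne_iff.mp hne
          rcases Bool.eq_false_or_eq_true (s.1 i) with hsi | hsi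
          · -- s i = true, s' i = false, so HW s = nl by ¬hdown
            have hsi' : s'.1 i = false := by
              cases h' : s'.1 i
              · rfl
              · rw [hsi, h'] at hi; exact absurd rfl hi
            have hwnl : HW s.1 = nl := by
              have := hdown i hsi hsi'
              have := s.2.1
              omega
            have hsub : (Finset.univ.filter fun j => s'.1 j = true) ⊆
                (Finset.univ.filter fun j => s.1 j = true) := by
              intro j hj
              simp only [Finset.mem_filter, Finset.mem_univ, true_and] at hj ⊢
              by_contra h'
              have h'' : s.1 j = false := by simpa using h'
              have := hup j h'' hj
              omega
            have hlt : HW s'.1 < HW s.1 :=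
              Finset.card_lt_card ((Finset.ssubset_iff_of_subset hsub).mpr
                ⟨i, by simp [hsi], by simp [hsi']⟩)
            have := s'.2.1
            omega
          · -- s i = false, s' i = true, so HW s = nu by ¬hup
            have hsi' : s'.1 i = true := by
              cases h' : s'.1 i
              · rw [hsi, h'] at hi; exact absurd rfl hi
              · rfl
            have hwnu : HW s.1 = nu := by
              have := hup i hsi hsi'
              have := s.2.2
              omega
            -- then no down-diffs: filter s ⊆ filter s', strict via i
            have hsub : (Finset.univ.filter fun j => s.1 j = true) ⊆
                (Finset.univ.filter fun j => s'.1 j = true) := by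
              intro j hj
              simp only [Finset.mem_filter, Finset.mem_univ, true_and] at hj ⊢
              by_contra h'
              have h'' : s'.1 j = false := by simpa using h'
              have := hdown j hj h''
              omega
            have hlt : HW s.1 < HW s'.1 :=
              Finset.card_lt_card ((Finset.ssubset_iff_of_subset hsub).mpr
                ⟨i, by simp [hsi'], by simp [hsi]⟩)
            have := s'.2.2
            omega
    obtain ⟨i, hi, hl, hu⟩ := hmain
    set t : {s : Fin N → Bool // nl ≤ HW s ∧ HW s ≤ nu} :=
      ⟨Function.update s.1 i (s'.1 i), hl, hu⟩ with ht
    have hadj : (SearchGraph N nl nu).Adj s t := dist_update_one s.1 s'.1 i hi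
    have hdist : hammingDist t.1 s'.1 = n := by
      show hammingDist (Function.update s.1 i (s'.1 i)) s'.1 = n
      have := dist_update_pred s.1 s'.1 i hi
      omega
    obtain ⟨p, hp⟩ := ih t hdist
    exact ⟨SimpleGraph.Walk.cons hadj p, by simp [hp, hdist, hn]⟩
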